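/- Let P₁, P₂, σ₁², σ₂² > 0, δ ∈ (0,1], and C(ξ) = (1/2)·log(1+ξ). For α ∈ (0,1), define the TDMA rate point R_k(α_k) = min{α_k·C(P_k/(α_k σ₁²)), (α_k/δ)·[C(P_k/(α_k σ₁²)) − C(P_k/(α_k(σ₁²+σ₂²)))]} with α₁ = α, α₂ = 1−α. Then for every α ∈ (0,1), R₁(α) + R₂(α) ≤ min{C((P₁+P₂)/σ₁²), (1/δ)·[C((P₁+P₂)/σ₁²) − C((P₁+P₂)/(σ₁²+σ₂²))]}. -/

import Mathlib

noncomputable def C (ξ : ℝ) : ℝ := (1/2) * Real.log (1 + ξ)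

noncomputable def Rtdma (δ P σ1 σ2 α : ℝ) : ℝ :=
  min (α * C (P / (α * σ1)))
    ((α / δ) * (C (P / (α * σ1)) - C (P / (α * (σ1 + σ2)))))

lemma log_jensen {a b x y : ℝ} (ha : 0 ≤ a) (hb : 0 ≤ b) (hab : a + b = 1)
    (hx : 0 < x) (hy : 0 < y) :
    a * Real.log x + b * Real.log y ≤ Real.log (a * x + b * y) := by
  have := strictConcaveOn_log_Ioi.concaveOn.2 (Set.mem_Ioi.2 hx) (Set.mem_Ioi.2 hy) ha hb hab
  simpa [smul_eq_mul] using this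

lemma fracB {a b c d x y : ℝ} (ha : 0 < a) (hb : 0 < b) (hab : a + b = 1)
    (hc : 0 < c) (hcd : c ≤ d) (hx : 0 < x) (hy : 0 < y) :
    a * ((c + x) / (d + x)) + b * ((c + y) / (d + y)) ≤
      (c + (a * x + b * y)) / (d + (a * x + b * y)) := by
  have hd : 0 < d := lt_of_lt_of_le hc hcd
  have hdx : 0 < d + x := by linarith
  have hdy : 0 < d + y := by linarith
  have hz : 0 < a * x + b * y := by positivity
  have hdz : 0 < d + (a * x + b * y) := by linarith
  have key : a * ((c + x) / (d + x)) + b * ((c + y) / (d + y)) =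
      (a * (c + x) * (d + y) + b * (c + y) * (d + x)) / ((d + x) * (d + y)) := by
    field_simp
  rw [key, div_le_div_iff₀ (by positivity) hdz]
  have hb1 : b = 1 - a := by linarith
  subst hb1
  nlinarith [mul_nonneg (mul_nonneg (mul_pos ha hb).le (sub_nonneg.2 hcd)) (sq_nonneg (x - y))]

lemma fracB' {a b c d x y : ℝ} (ha : 0 < a) (hb : 0 < b) (hab : a + b = 1)
    (hc : 0 < c) (hcd : c ≤ d) (hx : 0 < x) (hy : 0 < y) :
    a * ((1 + x / c) / (1 + x / d)) + b * ((1 + y / c) / (1 + y / d)) ≤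
      (1 + (a * x + b * y) / c) / (1 + (a * x + b * y) / d) := by
  have hd : 0 < d := lt_of_lt_of_le hc hcd
  have hz : 0 < a * x + b * y := by positivity
  have e : ∀ t : ℝ, 0 < t → (1 + t / c) / (1 + t / d) = (d / c) * ((c + t) / (d + t)) := by
    intro t ht
    have h1 : (0:ℝ) < d + t := by linarith
    field_simp
  rw [e x hx, e y hy, e _ hz]
  calc a * (d / c * ((c + x) / (d + x))) + b * (d / c * ((c + y) / (d + y)))
      = (d / c) * (a * ((c + x) / (d + x)) + b * ((c + y) / (d + y))) := by ring
    _ ≤ (d / c) * ((c + (a * x + b * y)) / (d + (a * x + b * y))) := by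
        exact mul_le_mul_of_nonneg_left (fracB ha hb hab hc hcd hx hy) (by positivity)

theorem tdma_in_outer_bound (P1 P2 σ1 σ2 δ : ℝ)
    (hP1 : 0 < P1) (hP2 : 0 < P2) (h1 : 0 < σ1) (h2 : 0 < σ2)
    (hδ : δ ∈ Set.Ioc (0:ℝ) 1) :
    ∀ α : ℝ, α ∈ Set.Ioo (0:ℝ) 1 →
      Rtdma δ P1 σ1 σ2 α + Rtdma δ P2 σ1 σ2 (1 - α) ≤
        min (C ((P1 + P2) / σ1))
          ((1 / δ) * (C ((P1 + P2) / σ1) - C ((P1 + P2) / (σ1 + σ2)))) := by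
  obtain ⟨hδ0, hδ1⟩ := hδ
  intro α hα
  obtain ⟨hα0, hα1⟩ := hα
  have hβ : 0 < 1 - α := by linarith
  set β := 1 - α with hβdef
  set x := P1 / α with hxdef
  set y := P2 / β with hydef
  have hx : 0 < x := div_pos hP1 hα0
  have hy : 0 < y := div_pos hP2 hβ
  have hab : α + β = 1 := by simp [hβdef]
  have hs : 0 < σ1 + σ2 := by linarith
  have hsum : α * x + β * y = P1 + P2 := by
    rw [hxdef, hydef]; field_simp
  -- rewrite arguments
  have e1 : P1 / (α * σ1) = x / σ1 := by rw [hxdef, div_div]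
  have e1' : P1 / (α * (σ1 + σ2)) = x / (σ1 + σ2) := by rw [hxdef, div_div]
  have e2 : P2 / (β * σ1) = y / σ1 := by rw [hydef, div_div]
  have e2' : P2 / (β * (σ1 + σ2)) = y / (σ1 + σ2) := by rw [hydef, div_div]
  -- Statement 1
  have S1 : α * C (x / σ1) + β * C (y / σ1) ≤ C ((P1 + P2) / σ1) := by
    have h1x : 0 < 1 + x / σ1 := by positivity
    have h1y : 0 < 1 + y / σ1 := by positivity
    have hj := log_jensen hα0.le hβ.le hab h1x h1y
    have harg : α * (1 + x / σ1) + β * (1 + y / σ1) = 1 + (P1 + P2) / σ1 := by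
      rw [← hsum]; field_simp; ring
    rw [harg] at hj
    simp only [C]
    linarith
  -- Statement 2 (scaled by δ)
  have S2 : α * (C (x / σ1) - C (x / (σ1 + σ2))) + β * (C (y / σ1) - C (y / (σ1 + σ2))) ≤
      C ((P1 + P2) / σ1) - C ((P1 + P2) / (σ1 + σ2)) := by
    have hcd : σ1 ≤ σ1 + σ2 := by linarith
    set z := α * x + β * y with hzdef
    have hz : 0 < z := by positivity
    have r1 : (0:ℝ) < (1 + x / σ1) / (1 + x / (σ1 + σ2)) := by positivity
    have r2 : (0:ℝ) < (1 + y / σ1) / (1 + y / (σ1 + σ2)) := by positivity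
    have r3 : (0:ℝ) < (1 + z / σ1) / (1 + z / (σ1 + σ2)) := by positivity
    have hj := log_jensen hα0.le hβ.le hab r1 r2
    have hfr := fracB' hα0 hβ hab h1 hcd hx hy
    have hmono : Real.log (α * ((1 + x / σ1) / (1 + x / (σ1 + σ2))) +
        β * ((1 + y / σ1) / (1 + y / (σ1 + σ2)))) ≤
        Real.log ((1 + z / σ1) / (1 + z / (σ1 + σ2))) := by
      apply Real.log_le_log (by positivity) hfr
    have key : α * Real.log ((1 + x / σ1) / (1 + x / (σ1 + σ2))) +
        β * Real.log ((1 + y / σ1) / (1 + y / (σ1 + σ2))) ≤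
        Real.log ((1 + z / σ1) / (1 + z / (σ1 + σ2))) := le_trans hj hmono
    have lx : Real.log ((1 + x / σ1) / (1 + x / (σ1 + σ2))) =
        Real.log (1 + x / σ1) - Real.log (1 + x / (σ1 + σ2)) :=
      Real.log_div (by positivity) (by positivity)
    have ly : Real.log ((1 + y / σ1) / (1 + y / (σ1 + σ2))) =
        Real.log (1 + y / σ1) - Real.log (1 + y / (σ1 + σ2)) :=
      Real.log_div (by positivity) (by positivity)
    have lz : Real.log ((1 + z / σ1) / (1 + z / (σ1 + σ2))) =
        Real.log (1 + z / σ1) - Real.log (1 + z / (σ1 + σ2)) :=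
      Real.log_div (by positivity) (by positivity)
    rw [lx, ly, lz] at key
    simp only [C]
    rw [← hsum]
    linarith
  -- combine
  simp only [Rtdma, e1, e1', e2, e2']
  refine le_min ?_ ?_
  · calc min (α * C (x / σ1)) ((α / δ) * (C (x / σ1) - C (x / (σ1 + σ2)))) +
        min (β * C (y / σ1)) ((β / δ) * (C (y / σ1) - C (y / (σ1 + σ2))))
        ≤ α * C (x / σ1) + β * C (y / σ1) := add_le_add (min_le_left _ _) (min_le_left _ _)
      _ ≤ C ((P1 + P2) / σ1) := S1
  · have hS2' := mul_le_mul_of_nonneg_left S2 (le_of_lt (one_div_pos.2 hδ0))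
    calc min (α * C (x / σ1)) ((α / δ) * (C (x / σ1) - C (x / (σ1 + σ2)))) +
        min (β * C (y / σ1)) ((β / δ) * (C (y / σ1) - C (y / (σ1 + σ2))))
        ≤ (α / δ) * (C (x / σ1) - C (x / (σ1 + σ2))) +
          (β / δ) * (C (y / σ1) - C (y / (σ1 + σ2))) :=
          add_le_add (min_le_right _ _) (min_le_right _ _)
      _ = (1/δ) * (α * (C (x / σ1) - C (x / (σ1 + σ2))) +
          β * (C (y / σ1) - C (y / (σ1 + σ2)))) := by ring
      _ ≤ (1/δ) * (C ((P1 + P2) / σ1) - C ((P1 + P2) / (σ1 + σ2))) := hS2'
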